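/- Let X be a separable Banach space and let, for each 1 ≤ i ≤ l, T_i : ℓ₁ → X be an isomorphic embedding. Then for every i there exists an uncountable subset A_i of the Stone–Čech compactification βℕ such that the family {Q T_i** δ_p : p ∈ A_i} is linearly independent in X**/X, where Q : X** → X**/X is the quotient map and δ_p is the Dirac measure at p viewed as an element of ℓ₁** ≅ M(βℕ). -/

import Mathlib

open Filter

noncomputable section

namespace St3

abbrev L1 := lp (fun _ : ℕ => ℝ) 1

lemma summable_abs (z : L1) : Summable fun n => ‖(z : ℕ → ℝ) n‖ := by
  have := lp.hasSum_norm (p := 1) (by norm_num) z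
  simpa using this.summable

lemma tsum_abs_eq (z : L1) : ∑' n, ‖(z : ℕ → ℝ) n‖ = ‖z‖ := by
  have := lp.hasSum_norm (p := 1) (by norm_num) z
  simpa using this.tsum_eq

open scoped Classical in
lemma exists_sign_functional (S : Set ℕ) :
    ∃ φ : StrongDual ℝ L1, ‖φ‖ ≤ 1 ∧
      ∀ n, φ (lp.single 1 n 1) = if n ∈ S then (1:ℝ) else -1 := by
  classical
  set σ : ℕ → ℝ := fun n => if n ∈ S then (1:ℝ) else -1 with hσ
  have hσabs : ∀ n, ‖σ n‖ = 1 := by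
    intro n; by_cases h : n ∈ S <;> simp [σ, h]
  have hsum : ∀ z : L1, Summable fun n => σ n * (z : ℕ → ℝ) n := by
    intro z
    refine Summable.of_norm_bounded (summable_abs z) ?_
    intro n; simp [norm_mul, hσabs n]
  set L : L1 →ₗ[ℝ] ℝ :=
    { toFun := fun z => ∑' n, σ n * (z : ℕ → ℝ) n
      map_add' := by
        intro z w
        show (∑' n, σ n * ((z + w : L1) : ℕ → ℝ) n) = _
        rw [← Summable.tsum_add (hsum z) (hsum w)]
        congr 1; ext n
        simp [lp.coeFn_add, mul_add]
      map_smul' := by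
        intro c z
        show (∑' n, σ n * ((c • z : L1) : ℕ → ℝ) n) = _
        simp only [RingHom.id_apply, smul_eq_mul]
        rw [← Summable.tsum_mul_left c (hsum z)]
        congr 1; ext n
        simp [lp.coeFn_smul]; ring } with hL
  have hbound : ∀ z : L1, ‖L z‖ ≤ 1 * ‖z‖ := by
    intro z
    rw [one_mul, ← tsum_abs_eq z]
    calc ‖L z‖ ≤ ∑' n, ‖σ n * (z : ℕ → ℝ) n‖ :=
          norm_tsum_le_tsum_norm (by simpa [norm_mul, hσabs] using summable_abs z)
      _ = ∑' n, ‖(z : ℕ → ℝ) n‖ := by congr 1; ext n; simp [norm_mul, hσabs n]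
  refine ⟨L.mkContinuous 1 hbound, L.mkContinuous_norm_le (by norm_num) hbound, ?_⟩
  intro n
  show ∑' m, σ m * ((lp.single 1 n (1:ℝ)) : ℕ → ℝ) m = _
  rw [tsum_eq_single n]
  · rw [lp.single_apply_self, mul_one]
  · intro m hm
    rw [lp.single_apply_ne _ _ _ hm, mul_zero]

open scoped Classical in
lemma exists_sep_functional {X : Type*} [NormedAddCommGroup X] [NormedSpace ℝ X]
    (T : L1 →L[ℝ] X) {c : ℝ} (hc : 0 < c) (hT : ∀ y, c * ‖y‖ ≤ ‖T y‖) (S : Set ℕ) :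
    ∃ f : StrongDual ℝ X, ‖f‖ ≤ c⁻¹ ∧
      ∀ n, f (T (lp.single 1 n 1)) = if n ∈ S then (1:ℝ) else -1 := by
  obtain ⟨φ, hφ1, hφs⟩ := exists_sign_functional S
  have hinj : Function.Injective (T : L1 →ₗ[ℝ] X) := by
    rw [← LinearMap.ker_eq_bot, LinearMap.ker_eq_bot']
    intro y hy
    have := hT y
    rw [show (T : L1 →ₗ[ℝ] X) y = T y from rfl] at hy
    rw [hy, norm_zero] at this
    have h0 : ‖y‖ ≤ 0 := le_of_mul_le_mul_left (by linarith) hc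
    exact norm_le_zero_iff.mp h0
  set Y := LinearMap.range (T : L1 →ₗ[ℝ] X) with hY
  set e := LinearEquiv.ofInjective (T : L1 →ₗ[ℝ] X) hinj with heq
  have he : ∀ y : L1, ((e y : Y) : X) = T y := by
    intro y
    rw [heq]
    rfl
  let glin : Y →ₗ[ℝ] ℝ := φ.toLinearMap.comp e.symm.toLinearMap
  have key : ∀ w : Y, (w : X) = T (e.symm w) := by
    intro w
    conv_lhs => rw [← e.apply_symm_apply w]
    exact he _
  have hbound : ∀ w : Y, ‖glin w‖ ≤ c⁻¹ * ‖w‖ := by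
    intro w
    have h1 : ‖glin w‖ ≤ ‖φ‖ * ‖e.symm w‖ := φ.le_opNorm _
    have h2 : ‖e.symm w‖ ≤ c⁻¹ * ‖w‖ := by
      rw [le_inv_mul_iff₀ hc]
      calc c * ‖e.symm w‖ ≤ ‖T (e.symm w)‖ := hT _
        _ = ‖w‖ := by rw [← key w]; rfl
    calc ‖glin w‖ ≤ ‖φ‖ * ‖e.symm w‖ := h1
      _ ≤ 1 * (c⁻¹ * ‖w‖) := by
          apply mul_le_mul hφ1 h2 (norm_nonneg _) zero_le_one
      _ = c⁻¹ * ‖w‖ := one_mul _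
  let g := glin.mkContinuous c⁻¹ hbound
  obtain ⟨f, hfg, hfn⟩ := exists_extension_norm_eq Y g
  refine ⟨f, ?_, ?_⟩
  · rw [hfn]
    exact glin.mkContinuous_norm_le (by positivity) hbound
  · intro n
    have hmem : T (lp.single 1 n 1) ∈ Y := ⟨lp.single 1 n 1, rfl⟩
    have := hfg ⟨T (lp.single 1 n 1), hmem⟩
    rw [show ((⟨T (lp.single 1 n 1), hmem⟩ : Y) : X) = T (lp.single 1 n 1) from rfl] at this
    rw [this]
    show φ (e.symm ⟨T (lp.single 1 n 1), hmem⟩) = _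
    have : e.symm ⟨T (lp.single 1 n 1), hmem⟩ = lp.single 1 n 1 := by
      rw [LinearEquiv.symm_apply_eq]
      ext
      exact (he _).symm
    rw [this, hφs n]

lemma exists_mem_not_mem {p q : Ultrafilter ℕ} (h : p ≠ q) : ∃ S : Set ℕ, S ∈ p ∧ S ∉ q := by
  by_contra hcon
  push_neg at hcon
  have h2 : (↑q : Filter ℕ) ≤ ↑p := fun S hS => hcon S hS
  exact h (Ultrafilter.coe_injective (Ultrafilter.unique p h2)).symm

lemma sep_lemma {X : Type*} [NormedAddCommGroup X] [NormedSpace ℝ X]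
    (T : L1 →L[ℝ] X) {c : ℝ} (hc : 0 < c) (hT : ∀ y, c * ‖y‖ ≤ ‖T y‖)
    (D : Ultrafilter ℕ → StrongDual ℝ (StrongDual ℝ X))
    (hD : ∀ (p : Ultrafilter ℕ) (f : StrongDual ℝ X),
      Tendsto (fun n => f (T (lp.single 1 n (1:ℝ)))) (↑p : Filter ℕ) (nhds (D p f)))
    {p q : Ultrafilter ℕ} (hpq : p ≠ q) : 2 * c ≤ ‖D p - D q‖ := by
  classical
  obtain ⟨S, hSp, hSq⟩ := exists_mem_not_mem hpq
  obtain ⟨f, hfn, hfs⟩ := exists_sep_functional T hc hT S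
  have hp1 : D p f = 1 := by
    refine tendsto_nhds_unique (hD p f) ?_
    refine Tendsto.congr' ?_ tendsto_const_nhds
    filter_upwards [Ultrafilter.mem_coe.mpr hSp] with n hn
    simp [hfs n, hn]
  have hq1 : D q f = -1 := by
    refine tendsto_nhds_unique (hD q f) ?_
    refine Tendsto.congr' ?_ tendsto_const_nhds
    filter_upwards [Ultrafilter.mem_coe.mpr (Ultrafilter.compl_mem_iff_notMem.mpr hSq)] with n hn
    rw [hfs n, if_neg (by simpa using hn)]
  have h2 : ‖(D p - D q) f‖ = 2 := by
    rw [ContinuousLinearMap.sub_apply, hp1, hq1]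
    norm_num
  have h3 : (2:ℝ) ≤ ‖D p - D q‖ * c⁻¹ := by
    calc (2:ℝ) = ‖(D p - D q) f‖ := h2.symm
      _ ≤ ‖D p - D q‖ * ‖f‖ := (D p - D q).le_opNorm f
      _ ≤ ‖D p - D q‖ * c⁻¹ := mul_le_mul_of_nonneg_left hfn (norm_nonneg (D p - D q))
  have h4 := mul_le_mul_of_nonneg_right h3 hc.le
  rwa [mul_assoc, inv_mul_cancel₀ hc.ne', mul_one] at h4

lemma not_countable_ultrafilter : ¬ Countable (Ultrafilter ℕ) := by
  classical
  intro hcount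
  set F : (ℕ → Bool) → ℕ → ℕ := fun x n => Encodable.encode (List.ofFn fun i : Fin n => x i) with hF
  set U : Ultrafilter ℕ := Ultrafilter.of cofinite with hUdef
  have hU : (↑U : Filter ℕ) ≤ cofinite := Ultrafilter.of_le _
  set pm : (ℕ → Bool) → Ultrafilter ℕ := fun x => Ultrafilter.map (F x) U with hpm
  have hinj : Function.Injective pm := by
    intro x y hpq
    by_contra hxy
    obtain ⟨j, hj⟩ := Function.ne_iff.mp hxy
    have hx : Set.range (F x) ∈ Ultrafilter.map (F x) U := by
      rw [Ultrafilter.mem_map, Set.preimage_range]; exact Filter.univ_mem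
    have hy : Set.range (F y) ∈ Ultrafilter.map (F x) U := by
      rw [show Ultrafilter.map (F x) U = Ultrafilter.map (F y) U from hpq,
        Ultrafilter.mem_map, Set.preimage_range]
      exact Filter.univ_mem
    have hV : (F x) ⁻¹' (Set.range (F x) ∩ Set.range (F y)) ∈ U :=
      Ultrafilter.mem_map.mp (Filter.inter_mem hx hy)
    set V := (F x) ⁻¹' (Set.range (F x) ∩ Set.range (F y)) with hVdef
    have hVsub : V ⊆ Set.Iic j := by
      intro n hn
      obtain ⟨-, m, hm⟩ := hn
      have hlist : (List.ofFn fun i : Fin m => y i) = List.ofFn fun i : Fin n => x i :=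
        Encodable.encode_injective hm
      have hmn : m = n := by
        have := congrArg List.length hlist
        simpa using this
      subst hmn
      rw [List.ofFn_inj] at hlist
      by_contra hnj
      simp only [Set.mem_Iic, not_le] at hnj
      exact hj (congrFun hlist ⟨j, hnj⟩).symm
    have hfin : V.Finite := (Set.finite_Iic j).subset hVsub
    have hVc : Vᶜ ∈ U := hU hfin.compl_mem_cofinite
    have := Filter.inter_mem (Ultrafilter.mem_coe.mpr hV) hVc
    rw [Set.inter_compl_self] at this
    exact Filter.empty_notMem _ this
  have hC : Countable (ℕ → Bool) := Function.Injective.countable hinj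
  have hC2 : Countable (Set ℕ) := by
    have hdec : Function.Injective (fun (S : Set ℕ) (n : ℕ) => decide (n ∈ S)) := by
      intro S R h
      ext n
      have := congrFun h n
      simpa using this
    exact Function.Injective.countable hdec
  obtain ⟨f, hf⟩ := exists_injective_nat (Set ℕ)
  exact Function.cantor_injective f hf

end St3

open St3 TopologicalSpace in
theorem statement3 {X : Type*} [NormedAddCommGroup X] [NormedSpace ℝ X] [CompleteSpace X]
    [TopologicalSpace.SeparableSpace X]
    (l : ℕ) (T : Fin l → (lp (fun _ : ℕ => ℝ) 1 →L[ℝ] X))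
    (hT : ∀ i, ∃ c > (0:ℝ), ∀ y, c * ‖y‖ ≤ ‖(T i) y‖)
    (D : Fin l → Ultrafilter ℕ → StrongDual ℝ (StrongDual ℝ X))
    (hD : ∀ (i : Fin l) (p : Ultrafilter ℕ) (f : StrongDual ℝ X),
      Tendsto (fun n => f ((T i) (lp.single 1 n (1:ℝ)))) (↑p : Filter ℕ) (nhds (D i p f))) :
    ∀ i, ∃ A : Set (Ultrafilter ℕ), ¬ A.Countable ∧
      LinearIndependent ℝ (fun p : A =>
        (Submodule.Quotient.mk (D i p) :
          StrongDual ℝ (StrongDual ℝ X) ⧸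
            LinearMap.range ((NormedSpace.inclusionInDoubleDual ℝ X)
              : X →ₗ[ℝ] StrongDual ℝ (StrongDual ℝ X)))) := by
  classical
  intro i
  obtain ⟨c, hc, hTc⟩ := hT i
  set W :=
    LinearMap.range ((NormedSpace.inclusionInDoubleDual ℝ X)
      : X →ₗ[ℝ] StrongDual ℝ (StrongDual ℝ X)) with hW
  obtain ⟨s, hind, hmax⟩ := exists_maximal_linearIndepOn ℝ
    (fun p : Ultrafilter ℕ =>
      (Submodule.Quotient.mk (D i p) : StrongDual ℝ (StrongDual ℝ X) ⧸ W))
  refine ⟨s, ?_, hind⟩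
  intro hs
  -- the separable superset
  set K : Submodule ℝ (StrongDual ℝ (StrongDual ℝ X)) :=
    Submodule.span ℝ (D i '' s) ⊔ W with hK
  have hWsep : IsSeparable (W : Set (StrongDual ℝ (StrongDual ℝ X))) := by
    have : (W : Set (StrongDual ℝ (StrongDual ℝ X)))
        = Set.range (NormedSpace.inclusionInDoubleDual ℝ X) := by
      rw [hW]
      ext w
      simp [LinearMap.mem_range]
    rw [this]
    exact (IsSeparable.of_separableSpace Set.univ).image
      (NormedSpace.inclusionInDoubleDual ℝ X).continuous |>.mono (by rw [Set.image_univ])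
  have hKsep : IsSeparable (K : Set (StrongDual ℝ (StrongDual ℝ X))) := by
    rw [hK, ← Submodule.span_eq W, ← Submodule.span_union]
    have : ContinuousAdd (StrongDual ℝ (StrongDual ℝ X)) :=
      (inferInstance : IsTopologicalAddGroup (StrongDual ℝ (StrongDual ℝ X))).toContinuousAdd
    exact ((hs.image (D i)).isSeparable.union hWsep).span
  have hvK : ∀ p, D i p ∈ K := by
    intro p
    by_cases hp : p ∈ s
    · exact Submodule.mem_sup_left (Submodule.subset_span (Set.mem_image_of_mem _ hp))
    · obtain ⟨a, ha0, haspan⟩ := hmax p hp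
      have h1 : (Submodule.Quotient.mk (D i p) :
          StrongDual ℝ (StrongDual ℝ X) ⧸ W)
          ∈ Submodule.span ℝ ((fun p : Ultrafilter ℕ =>
            (Submodule.Quotient.mk (D i p) : _ ⧸ W)) '' s) := by
        have := Submodule.smul_mem _ a⁻¹ haspan
        rwa [smul_smul, inv_mul_cancel₀ ha0, one_smul] at this
      have himg : ((fun p : Ultrafilter ℕ =>
          (Submodule.Quotient.mk (D i p) : _ ⧸ W)) '' s) = W.mkQ '' (D i '' s) := by
        rw [Set.image_image]
        rfl
      rw [himg, ← Submodule.map_span] at h1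
      obtain ⟨w, hw, hweq⟩ := Submodule.mem_map.mp h1
      have hdiff : D i p - w ∈ W := by
        rw [Submodule.mkQ_apply] at hweq
        exact (Submodule.Quotient.eq W).mp hweq.symm
      have : D i p = w + (D i p - w) := by abel
      rw [this]
      exact K.add_mem (Submodule.mem_sup_left hw)
        (Submodule.mem_sup_right hdiff)
  obtain ⟨D₀, hD₀c, hD₀⟩ := hKsep
  have hclose : ∀ p, D i p ∈ closure D₀ := fun p => hD₀ (hvK p)
  choose d hd hdist using fun p => (Metric.mem_closure_iff (α := StrongDual ℝ (StrongDual ℝ X))).mp (hclose p) c hc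
  have dinj : Function.Injective d := by
    intro p q hdq
    by_contra hne
    have hsep2 : 2 * c ≤ ‖D i p - D i q‖ := sep_lemma (T i) hc hTc (D i) (hD i) hne
    have ht : dist (D i p) (D i q) ≤ dist (D i p) (d p) + dist (d q) (D i q) := by
      rw [hdq]
      exact dist_triangle _ _ _
    rw [show dist (D i p) (D i q) = ‖D i p - D i q‖ from dist_eq_norm (E := StrongDual ℝ (StrongDual ℝ X)) _ _] at ht
    have h1 := hdist p
    have h2 := hdist q
    rw [show dist (D i q) (d q) = dist (d q) (D i q) from dist_comm _ _] at h2
    linarith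
  have : Countable ↥D₀ := hD₀c.to_subtype
  have hcnt : Countable (Ultrafilter ℕ) := by
    have hinj2 : Function.Injective (fun p => (⟨d p, hd p⟩ : D₀)) := by
      intro p q h
      exact dinj (congrArg Subtype.val h)
    exact Function.Injective.countable hinj2
  exact not_countable_ultrafilter hcnt
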